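/- The formal power series s_C(t) = Σ_{i≥0} e_C(π̃/θ^{i+1}) t^i satisfies the τ-difference equation s_C^{(1)}(t) = (t − θ)·s_C(t) as an identity of formal power series in C[[t]]. -/

import Mathlib

set_option linter.unusedSectionVars false

set_option maxHeartbeats 1000000

/-- The `k`-th Anderson twist of a formal power series: `f^{(k)} = ∑ f_i^{q^k} t^i`. -/
noncomputable def andersonTwist {C : Type*} [Field C] (q k : ℕ) (f : PowerSeries C) :
    PowerSeries C :=
  PowerSeries.mk fun i => (PowerSeries.coeff i) f ^ q ^ k

/-- The Carlitz factorials: `d_0 = 1`, `d_i = [i] d_{i-1}^q` with `[i] = θ^{q^i} - θ`. -/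
noncomputable def carlitzD {C : Type*} [Field C] (q : ℕ) (θ : C) : ℕ → C
  | 0 => 1
  | i + 1 => (θ ^ q ^ (i + 1) - θ) * carlitzD q θ i ^ q

section aux

variable {C : Type*} [NormedField C] [CompleteSpace C] [IsUltrametricDist C]

lemma norm_bracket (q : ℕ) (hq1 : 1 < q) (θ : C) (hθ : ‖θ‖ = (q : ℝ)) (i : ℕ) :
    ‖θ ^ q ^ (i + 1) - θ‖ = (q : ℝ) ^ q ^ (i + 1) := by
  have hqr : (1 : ℝ) < q := by exact_mod_cast hq1
  have h1 : ‖θ ^ q ^ (i + 1)‖ = (q : ℝ) ^ q ^ (i + 1) := by rw [norm_pow, hθ]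
  have hne : ‖θ ^ q ^ (i + 1)‖ ≠ ‖-θ‖ := by
    rw [norm_neg, h1, hθ]
    have : (q : ℝ) ^ 1 < (q : ℝ) ^ q ^ (i + 1) := by
      apply pow_lt_pow_right₀ hqr
      exact Nat.one_lt_pow (Nat.succ_ne_zero i) hq1
    simpa using this.ne'
  have := IsUltrametricDist.norm_add_eq_max_of_norm_ne_norm hne
  rw [← sub_eq_add_neg] at this
  rw [this, h1, norm_neg, hθ]
  exact max_eq_left (by
    have : (q : ℝ) ^ 1 ≤ (q : ℝ) ^ q ^ (i + 1) :=
      pow_le_pow_right₀ hqr.le (Nat.one_le_pow _ _ (by omega))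
    simpa using this)

lemma bracket_ne_zero (q : ℕ) (hq1 : 1 < q) (θ : C) (hθ : ‖θ‖ = (q : ℝ)) (i : ℕ) :
    θ ^ q ^ (i + 1) - θ ≠ 0 := by
  intro h0
  have h := norm_bracket q hq1 θ hθ i
  rw [h0, norm_zero] at h
  have : (0 : ℝ) < (q : ℝ) ^ q ^ (i + 1) := by positivity
  linarith [h ▸ this]

lemma norm_carlitzD (q : ℕ) (hq1 : 1 < q) (θ : C) (hθ : ‖θ‖ = (q : ℝ)) (i : ℕ) :
    ‖carlitzD q θ i‖ = (q : ℝ) ^ (i * q ^ i) := by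
  induction i with
  | zero => simp [carlitzD]
  | succ n ih =>
    rw [carlitzD, norm_mul, norm_pow, ih, norm_bracket q hq1 θ hθ, ← pow_mul, ← pow_add]
    ring_nf

lemma carlitzD_ne_zero (q : ℕ) (hq1 : 1 < q) (θ : C) (hθ : ‖θ‖ = (q : ℝ)) (i : ℕ) :
    carlitzD q θ i ≠ 0 := by
  intro h0
  have h := norm_carlitzD q hq1 θ hθ i
  rw [h0, norm_zero] at h
  have hq0 : (0 : ℝ) < q := by
    have : (1 : ℝ) < q := by exact_mod_cast hq1
    linarith
  have : (0 : ℝ) < (q : ℝ) ^ (i * q ^ i) := by positivity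
  linarith [h ▸ this]

lemma summable_eC (q : ℕ) (hq1 : 1 < q) (θ : C) (hθ : ‖θ‖ = (q : ℝ)) (z : C) :
    Summable fun i : ℕ => z ^ q ^ i / carlitzD q θ i := by
  apply NonarchimedeanAddGroup.summable_of_tendsto_cofinite_zero
  rw [Nat.cofinite_eq_atTop]
  rw [tendsto_zero_iff_norm_tendsto_zero]
  have hqr : (1 : ℝ) < q := by exact_mod_cast hq1
  have hq0 : (0 : ℝ) < q := lt_trans zero_lt_one hqr
  have htop : Filter.Tendsto (fun i : ℕ => (q : ℝ) ^ i) Filter.atTop Filter.atTop :=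
    tendsto_pow_atTop_atTop_of_one_lt hqr
  have hlim : Filter.Tendsto (fun i : ℕ => ‖z‖ / (q : ℝ) ^ i) Filter.atTop (nhds 0) :=
    Filter.Tendsto.div_atTop tendsto_const_nhds htop
  refine squeeze_zero' (Filter.Eventually.of_forall fun i => norm_nonneg _) ?_ hlim
  filter_upwards [htop.eventually_ge_atTop (max ‖z‖ 1)] with i hi
  have h1 : (1 : ℝ) ≤ (q : ℝ) ^ i := le_trans (le_max_right _ _) hi
  have hz : ‖z‖ ≤ (q : ℝ) ^ i := le_trans (le_max_left _ _) hi
  have hnorm : ‖z ^ q ^ i / carlitzD q θ i‖ = (‖z‖ / (q : ℝ) ^ i) ^ q ^ i := by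
    rw [norm_div, norm_pow, norm_carlitzD q hq1 θ hθ, div_pow, ← pow_mul]
  rw [hnorm]
  have hx0 : 0 ≤ ‖z‖ / (q : ℝ) ^ i := div_nonneg (norm_nonneg _) (by positivity)
  have hx1 : ‖z‖ / (q : ℝ) ^ i ≤ 1 := (div_le_one (by positivity)).2 hz
  calc (‖z‖ / (q : ℝ) ^ i) ^ q ^ i ≤ (‖z‖ / (q : ℝ) ^ i) ^ 1 :=
        pow_le_pow_of_le_one hx0 hx1 (Nat.one_le_pow _ _ (by omega))
    _ = ‖z‖ / (q : ℝ) ^ i := pow_one _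

/-- The Carlitz functional equation `e_C(θ z) = θ e_C(z) + e_C(z)^q`. -/
lemma carlitz_feq (p e : ℕ) (hp : p.Prime) (he : 0 < e) [CharP C p]
    (q : ℕ) (hq : q = p ^ e)
    (θ : C) (hθ : ‖θ‖ = (q : ℝ)) (z : C) :
    (∑' i : ℕ, (θ * z) ^ q ^ i / carlitzD q θ i)
      = θ * (∑' i : ℕ, z ^ q ^ i / carlitzD q θ i)
        + (∑' i : ℕ, z ^ q ^ i / carlitzD q θ i) ^ q := by
  haveI : Fact p.Prime := ⟨hp⟩
  have hq1 : 1 < q := hq ▸ Nat.one_lt_pow he.ne' hp.one_lt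
  have hpow : ∀ a b : C, (a + b) ^ q = a ^ q + b ^ q := by
    subst hq; exact fun a b => add_pow_char_pow a b p e
  set f : ℕ → C := fun i => z ^ q ^ i / carlitzD q θ i with hf
  have hs : Summable f := summable_eC q hq1 θ hθ z
  have hd := carlitzD_ne_zero q hq1 θ hθ
  have hbr := bracket_ne_zero q hq1 θ hθ
  -- Frobenius: (∑ f)^q = ∑ f^q
  let φ : C →+ C :=
    { toFun := fun x => x ^ q
      map_zero' := zero_pow (by omega : q ≠ 0)
      map_add' := fun a b => hpow a b }
  have hcont : Continuous φ := continuous_pow q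
  have hfrob : (∑' i, f i) ^ q = ∑' i, (f i) ^ q := (hs.hasSum.map φ hcont).tsum_eq.symm
  -- summability of the twisted series
  have hsθ : Summable fun i => θ ^ q ^ i * f i := by
    have h2 := summable_eC q hq1 θ hθ (θ * z)
    apply h2.congr
    intro i
    rw [hf]
    simp only [mul_pow, mul_div_assoc]
  -- difference identity
  set g : ℕ → C := fun i => (θ ^ q ^ i - θ) * f i with hg
  have hsg : Summable g := by
    apply (hsθ.sub (hs.mul_left θ)).congr
    intro i
    rw [hg]; ring
  have hsub : (∑' i : ℕ, (θ * z) ^ q ^ i / carlitzD q θ i) - θ * (∑' i, f i)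
      = ∑' i, g i := by
    have h1 : (∑' i : ℕ, (θ * z) ^ q ^ i / carlitzD q θ i) = ∑' i, θ ^ q ^ i * f i :=
      tsum_congr fun i => by rw [hf]; simp only [mul_pow, mul_div_assoc]
    rw [h1, ← tsum_mul_left, ← Summable.tsum_sub hsθ (hs.mul_left θ)]
    exact tsum_congr fun i => by rw [hg]; ring
  -- shift the index
  have hg0 : g 0 = 0 := by simp [hg]
  have hgs : ∀ i : ℕ, g (i + 1) = (f i) ^ q := by
    intro i
    rw [hg, hf]
    show (θ ^ q ^ (i + 1) - θ) * (z ^ q ^ (i + 1) / carlitzD q θ (i + 1))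
      = (z ^ q ^ i / carlitzD q θ i) ^ q
    have key : ∀ b D Z : C, b ≠ 0 → D ≠ 0 → b * (Z / (b * D)) = Z / D := by
      intros b D Z hb hD; field_simp
    rw [carlitzD, show z ^ q ^ (i + 1) = (z ^ q ^ i) ^ q by rw [← pow_mul, ← pow_succ],
      div_pow, key _ _ _ (hbr i) (pow_ne_zero q (hd i))]
  have hshift : ∑' i, g i = (∑' i, f i) ^ q := by
    rw [Summable.tsum_eq_zero_add hsg, hg0, zero_add, hfrob]
    exact tsum_congr hgs
  rw [hshift] at hsub
  linear_combination hsub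
  
end aux

/-- The series `s_C(t) = ∑ e_C(π̃/θ^{i+1}) t^i` satisfies the τ-difference equation
`s_C^{(1)}(t) = (t - θ) s_C(t)` in `C[[t]]`. -/
theorem carlitz_sC_tau_difference
    {C : Type*} [NormedField C] [CompleteSpace C] [IsAlgClosed C] [IsUltrametricDist C]
    (p e : ℕ) (hp : p.Prime) (he : 0 < e) [CharP C p]
    (q : ℕ) (hq : q = p ^ e)
    (θ : C) (hθ : ‖θ‖ = (q : ℝ))
    (eC : C → C) (heC : ∀ z : C, eC z = ∑' i : ℕ, z ^ q ^ i / carlitzD q θ i)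
    (ϖ : C) (hϖ : ϖ ≠ 0) (hϖ0 : eC ϖ = 0) :
    andersonTwist q 1 (PowerSeries.mk fun i => eC (ϖ / θ ^ (i + 1)))
      = (PowerSeries.X - PowerSeries.C θ) *
          PowerSeries.mk fun i => eC (ϖ / θ ^ (i + 1)) := by
  have hq1 : 1 < q := hq ▸ Nat.one_lt_pow he.ne' hp.one_lt
  have hθ0 : θ ≠ 0 := by
    intro h
    rw [h, norm_zero] at hθ
    have : (1 : ℝ) < q := by exact_mod_cast hq1
    linarith
  have feq : ∀ z : C, eC (θ * z) = θ * eC z + (eC z) ^ q := by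
    intro z
    rw [heC, heC]
    exact carlitz_feq p e hp he q hq θ hθ z
  ext n
  rw [sub_mul]
  simp only [andersonTwist, PowerSeries.coeff_mk, map_sub, PowerSeries.coeff_C_mul, pow_one]
  cases n with
  | zero =>
    rw [PowerSeries.coeff_zero_X_mul]
    have hz : θ * (ϖ / θ ^ (0 + 1)) = ϖ := by field_simp; ring
    have := feq (ϖ / θ ^ (0 + 1))
    rw [hz, hϖ0] at this
    linear_combination -this
  | succ n =>
    rw [PowerSeries.coeff_succ_X_mul]
    simp only [PowerSeries.coeff_mk]
    have hz : θ * (ϖ / θ ^ (n + 1 + 1)) = ϖ / θ ^ (n + 1) := by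
      rw [eq_div_iff (pow_ne_zero _ hθ0)]
      field_simp
      ring
    have := feq (ϖ / θ ^ (n + 1 + 1))
    rw [hz] at this
    linear_combination -this
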